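/- For every δ > 0 and every ε > 0 there exists N > 0 such that for all x ≥ 0 and y ≥ δ with x + y ≥ N, the SIR solution S, I with initial data (x, y) satisfies v(x, y) ≤ ε (where v(x, y) = 0 if x ≤ γ/β). That is, v(x, y) → 0 as x + y → ∞ with x ≥ 0 and y ≥ δ. -/

import Mathlib

open Set Filter MeasureTheory Real Topology

section SIRHelpers

lemma myAntitoneOn {a b : ℝ} {f f' : ℝ → ℝ} (hc : ContinuousOn f (Icc a b))
    (hd : ∀ t ∈ Ioo a b, HasDerivAt f (f' t) t)
    (h0 : ∀ t ∈ Ioo a b, f' t ≤ 0) : AntitoneOn f (Icc a b) := by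
  apply antitoneOn_of_deriv_nonpos (convex_Icc a b) hc
  · intro t ht
    rw [interior_Icc] at ht
    exact (hd t ht).differentiableAt.differentiableWithinAt
  · intro t ht
    rw [interior_Icc] at ht
    rw [(hd t ht).deriv]
    exact h0 t ht

lemma myMonotoneOn {a b : ℝ} {f f' : ℝ → ℝ} (hc : ContinuousOn f (Icc a b))
    (hd : ∀ t ∈ Ioo a b, HasDerivAt f (f' t) t)
    (h0 : ∀ t ∈ Ioo a b, 0 ≤ f' t) : MonotoneOn f (Icc a b) := by
  apply monotoneOn_of_deriv_nonneg (convex_Icc a b) hc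
  · intro t ht
    rw [interior_Icc] at ht
    exact (hd t ht).differentiableAt.differentiableWithinAt
  · intro t ht
    rw [interior_Icc] at ht
    rw [(hd t ht).deriv]
    exact h0 t ht

lemma myConst {a b : ℝ} {f : ℝ → ℝ} (hab : a ≤ b) (hc : ContinuousOn f (Icc a b))
    (hd : ∀ t ∈ Ioo a b, HasDerivAt f 0 t) : f b = f a := by
  have h1 := myAntitoneOn hc hd (fun t _ => le_rfl)
  have h2 := myMonotoneOn hc hd (fun t _ => le_rfl)
  exact le_antisymm (h1 ⟨le_rfl, hab⟩ ⟨hab, le_rfl⟩ hab) (h2 ⟨le_rfl, hab⟩ ⟨hab, le_rfl⟩ hab)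

lemma primitive_hasDerivAt {g : ℝ → ℝ} (hg : ContinuousOn g (Ici 0)) {t : ℝ} (ht : 0 < t) :
    HasDerivAt (fun u => ∫ s in (0:ℝ)..u, g s) (g t) t := by
  apply intervalIntegral.integral_hasDerivAt_right
  · apply ContinuousOn.intervalIntegrable
    apply hg.mono
    rw [uIcc_of_le ht.le]
    exact Icc_subset_Ici_self
  · exact ⟨Ioi 0, Ioi_mem_nhds ht,
      (hg.mono Ioi_subset_Ici_self).aestronglyMeasurable measurableSet_Ioi⟩
  · exact hg.continuousAt (Ici_mem_nhds ht)

lemma primitive_cont {g : ℝ → ℝ} (hg : ContinuousOn g (Ici 0)) {T : ℝ} (hT : 0 ≤ T) :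
    ContinuousOn (fun u => ∫ s in (0:ℝ)..u, g s) (Icc 0 T) := by
  have h := intervalIntegral.continuousOn_primitive_interval (μ := volume) (f := g) (a := 0)
    (b := T) (by rw [uIcc_of_le hT]; exact (hg.mono Icc_subset_Ici_self).integrableOn_Icc)
  rwa [uIcc_of_le hT] at h

lemma tendsto_mul_exp_neg {k : ℝ} (hk : 0 < k) :
    Tendsto (fun u : ℝ => u * Real.exp (-(k * u))) atTop (𝓝 0) := by
  have h1 : Tendsto (fun u : ℝ => k * u) atTop atTop :=
    Tendsto.const_mul_atTop hk tendsto_id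
  have h2 := (Real.tendsto_pow_mul_exp_neg_atTop_nhds_zero 1).comp h1
  have h3 := h2.const_mul (1/k)
  rw [mul_zero] at h3
  refine h3.congr fun u => ?_
  simp only [Function.comp, pow_one]
  field_simp

end SIRHelpers

/-- An SIR solution with parameters β, γ and initial data (x, y):
differentiable functions S, I on [0,∞) with S' = -βSI, I' = βSI - γI,
S(0) = x, I(0) = y. -/
def IsSIRSolution (β γ x y : ℝ) (S I : ℝ → ℝ) : Prop :=
  S 0 = x ∧ I 0 = y ∧
  ∀ t, 0 ≤ t →
    HasDerivWithinAt S (-(β * S t * I t)) (Set.Ici 0) t ∧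
    HasDerivWithinAt I (β * S t * I t - γ * I t) (Set.Ici 0) t

lemma sir_pos {β γ x y : ℝ} {S I : ℝ → ℝ} (hx : 0 ≤ x) (hy : 0 < y)
    (hsir : IsSIRSolution β γ x y S I) {T : ℝ} (hT : 0 ≤ T) :
    0 < I T ∧ 0 ≤ S T := by
  obtain ⟨hS0, hI0, hD⟩ := hsir
  have hScont : ContinuousOn S (Ici 0) := fun t ht => ((hD t ht).1).continuousWithinAt
  have hIcont : ContinuousOn I (Ici 0) := fun t ht => ((hD t ht).2).continuousWithinAt
  have hderS : ∀ t : ℝ, 0 < t → HasDerivAt S (-(β * S t * I t)) t := fun t ht =>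
    ((hD t ht.le).1).hasDerivAt (Ici_mem_nhds ht)
  have hderI : ∀ t : ℝ, 0 < t → HasDerivAt I (β * S t * I t - γ * I t) t := fun t ht =>
    ((hD t ht.le).2).hasDerivAt (Ici_mem_nhds ht)
  set A : ℝ → ℝ := fun u => ∫ s in (0:ℝ)..u, S s with hAdef
  set B : ℝ → ℝ := fun u => ∫ s in (0:ℝ)..u, I s with hBdef
  have hA0 : A 0 = 0 := intervalIntegral.integral_same
  have hB0 : B 0 = 0 := intervalIntegral.integral_same
  constructor
  · have key : (fun u => I u * Real.exp (γ * u - β * A u)) T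
        = (fun u => I u * Real.exp (γ * u - β * A u)) 0 := by
      apply myConst hT
      · exact (hIcont.mono Icc_subset_Ici_self).mul
          (Real.continuous_exp.comp_continuousOn
            ((continuousOn_const.mul continuousOn_id).sub
              (continuousOn_const.mul (primitive_cont hScont hT))))
      · intro t ht
        have h1 : HasDerivAt (fun u => γ * u - β * A u) (γ * 1 - β * S t) t :=
          ((hasDerivAt_id t).const_mul γ).sub ((primitive_hasDerivAt hScont ht.1).const_mul β)
        have h4 := (hderI t ht.1).mul h1.exp
        exact h4.congr_deriv (by ring)
    simp only [hI0, mul_zero, hA0, sub_zero, Real.exp_zero, mul_one] at key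
    have he := Real.exp_pos (γ * T - β * A T)
    nlinarith [key]
  · have key : (fun u => S u * Real.exp (β * B u)) T
        = (fun u => S u * Real.exp (β * B u)) 0 := by
      apply myConst hT
      · exact (hScont.mono Icc_subset_Ici_self).mul
          (Real.continuous_exp.comp_continuousOn
            (continuousOn_const.mul (primitive_cont hIcont hT)))
      · intro t ht
        have h1 : HasDerivAt (fun u => β * B u) (β * I t) t :=
          (primitive_hasDerivAt hIcont ht.1).const_mul β
        have h4 := (hderS t ht.1).mul h1.exp
        exact h4.congr_deriv (by ring)
    simp only [hS0, hB0, mul_zero, Real.exp_zero, mul_one] at key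
    have he := Real.exp_pos (β * B T)
    nlinarith [key]

theorem stmt_17 (β γ : ℝ) (hβ : 0 < β) (hγ : 0 < γ) (δ : ℝ) (hδ : 0 < δ)
    (ε : ℝ) (hε : 0 < ε) :
    ∃ N : ℝ, 0 < N ∧
      ∀ x y : ℝ, 0 ≤ x → δ ≤ y → N ≤ x + y →
        ∀ S I : ℝ → ℝ, IsSIRSolution β γ x y S I →
          ∀ v : ℝ, IsLeast {t : ℝ | 0 ≤ t ∧ S t ≤ γ / β} v → v ≤ ε := by
  have hc2 : (0:ℝ) < 2 + γ * ε := by positivity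
  set c₂ : ℝ := 1 / (2 + γ * ε) with hc₂def
  have hc₂ : 0 < c₂ := by positivity
  have t1 := tendsto_mul_exp_neg (k := β * c₂ * (ε/2)) (by positivity)
  have t2 := (tendsto_mul_exp_neg (k := β * (ε/4)) (by positivity)).const_mul c₂
  rw [mul_zero] at t2
  have E1 : ∀ᶠ u in atTop, u * Real.exp (-(β * c₂ * (ε/2) * u)) < γ / β :=
    t1.eventually_lt_const (by positivity)
  have E2 : ∀ᶠ u in atTop,
      c₂ * (u * Real.exp (-(β * (ε/4) * u))) < δ * Real.exp (-(γ * (ε/2))) :=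
    t2.eventually_lt_const (by positivity)
  obtain ⟨N₀, hN₀⟩ := eventually_atTop.1 (E1.and E2)
  refine ⟨max N₀ 1, lt_of_lt_of_le one_pos (le_max_right _ _), ?_⟩
  intro x y hx hy hN S I hsir v hv
  by_contra hvε
  push_neg at hvε
  have hS : ∀ t : ℝ, 0 ≤ t → t ≤ ε → γ / β < S t := by
    intro t h0 h1
    by_contra hcon
    push_neg at hcon
    exact absurd (hv.2 ⟨h0, hcon⟩) (by linarith)
  have hy0 : 0 < y := lt_of_lt_of_le hδ hy
  have pos : ∀ t : ℝ, 0 ≤ t → 0 < I t ∧ 0 ≤ S t := fun t ht => sir_pos hx hy0 hsir ht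
  obtain ⟨hS0, hI0, hD⟩ := hsir
  have hScont : ContinuousOn S (Ici 0) := fun t ht => ((hD t ht).1).continuousWithinAt
  have hIcont : ContinuousOn I (Ici 0) := fun t ht => ((hD t ht).2).continuousWithinAt
  have hderS : ∀ t : ℝ, 0 < t → HasDerivAt S (-(β * S t * I t)) t := fun t ht =>
    ((hD t ht.le).1).hasDerivAt (Ici_mem_nhds ht)
  have hderI : ∀ t : ℝ, 0 < t → HasDerivAt I (β * S t * I t - γ * I t) t := fun t ht =>
    ((hD t ht.le).2).hasDerivAt (Ici_mem_nhds ht)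
  have hε2 : (0:ℝ) ≤ ε/2 := by linarith
  have hε2ε : ε/2 ≤ ε := by linarith
  have hxy1 : (1:ℝ) ≤ x + y := le_trans (le_max_right _ _) hN
  have huN : N₀ ≤ x + y := le_trans (le_max_left _ _) hN
  obtain ⟨e1, e2⟩ := hN₀ (x + y) huN
  -- S is antitone on [0, ε]
  have Santi : AntitoneOn S (Icc 0 ε) := by
    apply myAntitoneOn (f' := fun t => -(β * S t * I t))
      (hScont.mono Icc_subset_Ici_self) (fun t ht => hderS t ht.1)
    intro t ht
    have h1 := pos t ht.1.le
    nlinarith [mul_nonneg (mul_nonneg hβ.le h1.2) h1.1.le]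
  -- I is monotone on [0, ε]
  have Imono : MonotoneOn I (Icc 0 ε) := by
    apply myMonotoneOn (f' := fun t => β * S t * I t - γ * I t)
      (hIcont.mono Icc_subset_Ici_self) (fun t ht => hderI t ht.1)
    intro t ht
    have h1 := (pos t ht.1.le).1
    have h2 := hS t ht.1.le ht.2.le
    rw [div_lt_iff₀ hβ] at h2
    nlinarith [mul_nonneg h1.le (sub_nonneg.2 h2.le)]
  set B : ℝ → ℝ := fun u => ∫ s in (0:ℝ)..u, I s with hBdef
  have hB0 : B 0 = 0 := intervalIntegral.integral_same
  -- conservation identity at ε/2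
  have key : S (ε/2) + I (ε/2) + γ * B (ε/2) = x + y := by
    have h := myConst (a := 0) (b := ε/2) (f := fun u => S u + I u + γ * B u) hε2
      (((hScont.mono Icc_subset_Ici_self).add (hIcont.mono Icc_subset_Ici_self)).add
        (continuousOn_const.mul (primitive_cont hIcont hε2)))
      (by
        intro t ht
        have h4 := ((hderS t ht.1).add (hderI t ht.1)).add
          ((primitive_hasDerivAt hIcont ht.1).const_mul γ)
        exact h4.congr_deriv (by ring))
    simpa [hS0, hI0, hB0] using h
  -- integral bound
  have intI : IntervalIntegrable I MeasureTheory.volume 0 (ε/2) :=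
    ContinuousOn.intervalIntegrable
      (by rw [uIcc_of_le hε2]; exact hIcont.mono Icc_subset_Ici_self)
  have Bbound : B (ε/2) ≤ (ε/2) * I (ε/2) := by
    have h1 : (∫ s in (0:ℝ)..(ε/2), I s) ≤ ∫ s in (0:ℝ)..(ε/2), I (ε/2) :=
      intervalIntegral.integral_mono_on hε2 intI intervalIntegrable_const
        (fun s hs => Imono ⟨hs.1, hs.2.trans hε2ε⟩ ⟨hε2, hε2ε⟩ hs.2)
    simpa using h1
  -- lower bound on I (ε/2)
  have hIh : c₂ * (x + y) ≤ I (ε/2) := by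
    rcases le_or_gt (S (ε/2)) ((x + y)/2) with hcase | hcase
    · have hBb := mul_le_mul_of_nonneg_left Bbound hγ.le
      have hrw : c₂ * (x + y) = (x + y) / (2 + γ * ε) := by
        rw [hc₂def]; ring
      rw [hrw, div_le_iff₀ hc2]
      nlinarith [(pos (ε/2) hε2).1]
    · set M : ℝ := (x + y)/2 with hM
      have SlbOn : ∀ t ∈ Icc (0:ℝ) (ε/2), M ≤ S t := by
        intro t ht
        have := Santi ⟨ht.1, ht.2.trans hε2ε⟩ ⟨hε2, hε2ε⟩ ht.2
        linarith
      have φmono : MonotoneOn (fun t => I t * Real.exp ((γ - β * M) * t)) (Icc 0 (ε/2)) := by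
        apply myMonotoneOn (f' := fun t => Real.exp ((γ - β * M) * t) * (β * I t * (S t - M)))
        · exact (hIcont.mono Icc_subset_Ici_self).mul
            (Real.continuous_exp.comp (continuous_const.mul continuous_id)).continuousOn
        · intro t ht
          have h1 : HasDerivAt (fun u => (γ - β * M) * u) ((γ - β * M) * 1) t :=
            (hasDerivAt_id t).const_mul _
          have h4 := (hderI t ht.1).mul h1.exp
          exact h4.congr_deriv (by ring)
        · intro t ht
          have h1 := (pos t ht.1.le).1
          have h2 := SlbOn t ⟨ht.1.le, ht.2.le⟩
          exact mul_nonneg (Real.exp_pos _).le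
            (mul_nonneg (mul_nonneg hβ.le h1.le) (by linarith))
      have hφ := φmono ⟨le_rfl, hε2⟩ ⟨hε2, le_rfl⟩ hε2
      simp only [hI0, mul_zero, Real.exp_zero, mul_one] at hφ
      have hIh2 : y * Real.exp ((β * M - γ) * (ε/2)) ≤ I (ε/2) := by
        have h3 := mul_le_mul_of_nonneg_right hφ (Real.exp_pos ((β * M - γ) * (ε/2))).le
        calc y * Real.exp ((β * M - γ) * (ε/2))
            ≤ I (ε/2) * Real.exp ((γ - β * M) * (ε/2)) * Real.exp ((β * M - γ) * (ε/2)) := h3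
          _ = I (ε/2) := by
              rw [mul_assoc, ← Real.exp_add]
              have h5 : (γ - β * M) * (ε/2) + (β * M - γ) * (ε/2) = 0 := by ring
              rw [h5, Real.exp_zero, mul_one]
      have e2' : c₂ * (x + y) < δ * Real.exp ((β * M - γ) * (ε/2)) := by
        have h6 := mul_lt_mul_of_pos_right e2 (Real.exp_pos (β * (ε/4) * (x + y)))
        calc c₂ * (x + y)
            = c₂ * ((x + y) * Real.exp (-(β * (ε/4) * (x + y))))
              * Real.exp (β * (ε/4) * (x + y)) := by
              rw [mul_assoc, mul_assoc, ← Real.exp_add, neg_add_cancel, Real.exp_zero, mul_one]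
          _ < δ * Real.exp (-(γ * (ε/2))) * Real.exp (β * (ε/4) * (x + y)) := h6
          _ = δ * Real.exp ((β * M - γ) * (ε/2)) := by
              rw [mul_assoc, ← Real.exp_add]
              congr 1
              rw [hM]; ring
      have h7 : δ * Real.exp ((β * M - γ) * (ε/2)) ≤ y * Real.exp ((β * M - γ) * (ε/2)) :=
        mul_le_mul_of_nonneg_right hy (Real.exp_pos _).le
      linarith
  -- exponential decay of S on [ε/2, ε]
  set K : ℝ := c₂ * (x + y) with hK
  have hKpos : 0 < K := mul_pos hc₂ (by linarith)
  have ψanti : AntitoneOn (fun t => S t * Real.exp (β * K * t)) (Icc (ε/2) ε) := by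
    apply myAntitoneOn (f' := fun t => Real.exp (β * K * t) * (β * S t * (K - I t)))
    · exact (hScont.mono (fun t ht => le_trans hε2 ht.1)).mul
        (Real.continuous_exp.comp (continuous_const.mul continuous_id)).continuousOn
    · intro t ht
      have ht0 : 0 < t := lt_of_le_of_lt hε2 ht.1
      have h1 : HasDerivAt (fun u => β * K * u) (β * K * 1) t := (hasDerivAt_id t).const_mul _
      have h4 := (hderS t ht0).mul h1.exp
      exact h4.congr_deriv (by ring)
    · intro t ht
      have ht0 : 0 < t := lt_of_le_of_lt hε2 ht.1
      have hIt : K ≤ I t := le_trans hIh (Imono ⟨hε2, hε2ε⟩ ⟨ht0.le, ht.2.le⟩ ht.1.le)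
      have hSt := (pos t ht0.le).2
      have he := Real.exp_pos (β * K * t)
      nlinarith [mul_nonneg (mul_nonneg (mul_nonneg he.le hβ.le) hSt) (sub_nonneg.2 hIt)]
  have hψ := ψanti ⟨le_rfl, hε2ε⟩ ⟨hε2ε, le_rfl⟩ hε2ε
  have hSh : S (ε/2) ≤ x := by
    have := Santi ⟨le_rfl, hε.le⟩ ⟨hε2, hε2ε⟩ hε2
    rw [hS0] at this
    exact this
  have hfinal : S ε ≤ (x + y) * Real.exp (-(β * c₂ * (ε/2) * (x + y))) := by
    have h7 : S ε * Real.exp (β * K * ε) ≤ (x + y) * Real.exp (β * K * (ε/2)) :=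
      le_trans hψ (mul_le_mul_of_nonneg_right (le_trans hSh (by linarith))
        (Real.exp_pos _).le)
    have h8 := mul_le_mul_of_nonneg_right h7 (Real.exp_pos (-(β * K * ε))).le
    calc S ε = S ε * Real.exp (β * K * ε) * Real.exp (-(β * K * ε)) := by
          rw [mul_assoc, ← Real.exp_add, add_neg_cancel, Real.exp_zero, mul_one]
      _ ≤ (x + y) * Real.exp (β * K * (ε/2)) * Real.exp (-(β * K * ε)) := h8
      _ = (x + y) * Real.exp (-(β * c₂ * (ε/2) * (x + y))) := by
          rw [mul_assoc, ← Real.exp_add]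
          congr 1
          rw [hK]; ring
  have hSε := hS ε hε.le le_rfl
  linarith [e1, hfinal]
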